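/- Let B be a 2m×2m skew-symmetric matrix over a commutative ring, viewed as an m×m array of 2×2 blocks B(r,s). Let J_m be the block-diagonal skew-symmetric matrix whose (r,r)-block is [[0,1],[-1,0]]. Then for any scalar z, pf(J_m + zB) = ∑_{k=0}^{m} z^k ∑_{1 ≤ s_1 < ... < s_k ≤ m} pf(B[s_1,...,s_k]), where B[s_1,...,s_k] is the 2k×2k skew-symmetric submatrix formed by the blocks B(s_i,s_j). -/

import Mathlib

open Matrix
open scoped Classical

/-- The Pfaffian of an `n × n` skew-symmetric matrix (meaningful for even `n`),
defined as the sum over permutations `σ` with `σ(2j) < σ(2j+1)` for all `j` and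
`σ(0) < σ(2) < ⋯` of `sgn(σ) ∏ⱼ A (σ(2j)) (σ(2j+1))`. -/
noncomputable def pf {n : ℕ} {R : Type*} [CommRing R] (A : Matrix (Fin n) (Fin n) R) : R :=
  ∑ σ ∈ Finset.univ.filter (fun σ : Equiv.Perm (Fin n) =>
      (∀ j : Fin (n / 2),
        (σ ⟨2 * j.val, by have := j.isLt; omega⟩).val
          < (σ ⟨2 * j.val + 1, by have := j.isLt; omega⟩).val) ∧
      (∀ j k : Fin (n / 2), j < k →
        (σ ⟨2 * j.val, by have := j.isLt; omega⟩).val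
          < (σ ⟨2 * k.val, by have := k.isLt; omega⟩).val)),
    ((Equiv.Perm.sign σ : ℤ) : R) *
      ∏ j : Fin (n / 2),
        A (σ ⟨2 * j.val, by have := j.isLt; omega⟩) (σ ⟨2 * j.val + 1, by have := j.isLt; omega⟩)

/-- The `2m × 2m` block-diagonal skew-symmetric matrix with `2 × 2` diagonal
blocks `[[0,1],[-1,0]]`. -/
def Jmat (m : ℕ) {R : Type*} [CommRing R] : Matrix (Fin (2 * m)) (Fin (2 * m)) R :=
  fun i j => if i.val % 2 = 0 ∧ j.val = i.val + 1 then 1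
    else if j.val % 2 = 0 ∧ i.val = j.val + 1 then -1 else 0

/-- The embedding `Fin (2k) → Fin (2m)` sending the `2 × 2` block positions of the
block indexed by `i` to those of the block indexed by `t i`. -/
def emb {m k : ℕ} (t : Fin k → Fin m) (i : Fin (2 * k)) : Fin (2 * m) :=
  have h : i.val / 2 < k := by have := i.isLt; omega
  ⟨2 * (t ⟨i.val / 2, h⟩).val + i.val % 2, by have := (t ⟨i.val / 2, h⟩).isLt; omega⟩

/-- The `2k × 2k` skew-symmetric submatrix of a `2m × 2m` matrix `B` formed by the
`2 × 2` blocks `B(t i, t j)`. -/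
def blockSub {R : Type*} [CommRing R] {m k : ℕ} (B : Matrix (Fin (2 * m)) (Fin (2 * m)) R)
    (t : Fin k → Fin m) : Matrix (Fin (2 * k)) (Fin (2 * k)) R :=
  B.submatrix (emb t) (emb t)

namespace PfJProof

open Finset Equiv Equiv.Perm

variable {R : Type*} [CommRing R]

def d0 {m : ℕ} (j : Fin m) : Fin (2 * m) := ⟨2 * j.val, by have := j.isLt; omega⟩
def d1 {m : ℕ} (j : Fin m) : Fin (2 * m) := ⟨2 * j.val + 1, by have := j.isLt; omega⟩

@[simp] lemma val_d0 {m : ℕ} (j : Fin m) : (d0 j).val = 2 * j.val := rfl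
@[simp] lemma val_d1 {m : ℕ} (j : Fin m) : (d1 j).val = 2 * j.val + 1 := rfl

lemma d0_injective {m : ℕ} : Function.Injective (d0 (m := m)) := by
  intro a b h
  have := congrArg Fin.val h
  simp only [val_d0] at this
  exact Fin.ext (by omega)

/-- Every element of `Fin (2*m)` is `d0` or `d1` of its block. -/
lemma d0_or_d1 {m : ℕ} (x : Fin (2 * m)) (hx : x.val / 2 < m) :
    x = d0 ⟨x.val / 2, hx⟩ ∨ x = d1 ⟨x.val / 2, hx⟩ := by
  by_cases h : x.val % 2 = 0
  · left; apply Fin.ext; simp only [val_d0]; omega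
  · right; apply Fin.ext; simp only [val_d1]; omega

def Mset (m : ℕ) : Finset (Equiv.Perm (Fin (2 * m))) :=
  Finset.univ.filter fun σ =>
    (∀ j : Fin m, (σ (d0 j)).val < (σ (d1 j)).val) ∧
    (∀ j l : Fin m, j < l → (σ (d0 j)).val < (σ (d0 l)).val)

lemma mem_Mset {m : ℕ} {σ : Equiv.Perm (Fin (2 * m))} :
    σ ∈ Mset m ↔ (∀ j : Fin m, (σ (d0 j)).val < (σ (d1 j)).val) ∧
      (∀ j l : Fin m, j < l → (σ (d0 j)).val < (σ (d0 l)).val) := by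
  simp [Mset]

lemma pf_eq {m : ℕ} (A : Matrix (Fin (2 * m)) (Fin (2 * m)) R) :
    pf A = ∑ σ ∈ Mset m,
      ((Equiv.Perm.sign σ : ℤ) : R) * ∏ j : Fin m, A (σ (d0 j)) (σ (d1 j)) := by
  have h : 2 * m / 2 = m := by omega
  unfold pf Mset
  apply Finset.sum_congr
  · apply Finset.filter_congr
    intro σ _
    constructor
    · rintro ⟨h1, h2⟩
      refine ⟨fun j => h1 ⟨j.val, by omega⟩, fun j l hjl => ?_⟩
      exact h2 ⟨j.val, by omega⟩ ⟨l.val, by omega⟩ (Fin.mk_lt_mk.mpr hjl)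
    · rintro ⟨h1, h2⟩
      refine ⟨fun j => h1 ⟨j.val, by omega⟩, fun j l hjl => ?_⟩
      exact h2 ⟨j.val, by omega⟩ ⟨l.val, by omega⟩ (Fin.mk_lt_mk.mpr hjl)
  · intro σ _
    congr 1
    exact Fintype.prod_equiv (finCongr h) _ _ (fun x => rfl)

/-! ### blowup of a permutation -/

def E2 (m : ℕ) : Fin m × Fin 2 ≃ Fin (2 * m) :=
  finProdFinEquiv.trans (finCongr (by ring))

def blow {m : ℕ} (π : Equiv.Perm (Fin m)) : Equiv.Perm (Fin (2 * m)) :=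
  (E2 m).permCongr (Equiv.prodCongrLeft (fun _ : Fin 2 => π))

lemma blow_val {m : ℕ} (π : Equiv.Perm (Fin m)) (x : Fin (2 * m)) (hx : x.val / 2 < m) :
    (blow π x).val = 2 * (π ⟨x.val / 2, hx⟩).val + x.val % 2 := by
  show ((E2 m) ((Equiv.prodCongrLeft (fun _ : Fin 2 => π)) ((E2 m).symm x))).val = _
  have h1 : (E2 m).symm x = (⟨x.val / 2, hx⟩, ⟨x.val % 2, by omega⟩) := by
    show (finProdFinEquiv.symm (finCongr (by ring : 2 * m = m * 2) x)) = _
    apply Prod.ext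
    · apply Fin.ext
      simp [finProdFinEquiv, Fin.divNat]
    · apply Fin.ext
      simp [finProdFinEquiv, Fin.modNat]
  rw [h1]
  show ((E2 m) (π ⟨x.val / 2, hx⟩, ⟨x.val % 2, by omega⟩)).val = _
  show ((finCongr (by ring : m * 2 = 2 * m)) (finProdFinEquiv _)).val = _
  simp [finProdFinEquiv]
  omega

lemma blow_d0 {m : ℕ} (π : Equiv.Perm (Fin m)) (j : Fin m) : blow π (d0 j) = d0 (π j) := by
  have hx : (d0 j).val / 2 < m := by simp only [val_d0]; omega
  apply Fin.ext
  rw [blow_val π (d0 j) hx]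
  have : (⟨(d0 j).val / 2, hx⟩ : Fin m) = j := Fin.ext (by simp only [val_d0]; omega)
  rw [this]
  simp only [val_d0]; omega

lemma blow_d1 {m : ℕ} (π : Equiv.Perm (Fin m)) (j : Fin m) : blow π (d1 j) = d1 (π j) := by
  have hx : (d1 j).val / 2 < m := by simp only [val_d1]; omega
  apply Fin.ext
  rw [blow_val π (d1 j) hx]
  have : (⟨(d1 j).val / 2, hx⟩ : Fin m) = j := Fin.ext (by simp only [val_d1]; omega)
  rw [this]
  simp only [val_d1]; omega

lemma sign_blow {m : ℕ} (π : Equiv.Perm (Fin m)) : Equiv.Perm.sign (blow π) = 1 := by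
  unfold blow
  rw [Equiv.Perm.sign_permCongr, Equiv.Perm.sign_prodCongrLeft]
  rw [Finset.prod_const, Finset.card_univ, Fintype.card_fin]
  exact Int.units_sq _

/-! ### extension of a permutation of an initial segment -/

def loEquiv {k m : ℕ} (h : 2 * k ≤ 2 * m) :
    Fin (2 * k) ≃ {x : Fin (2 * m) // x.val < 2 * k} where
  toFun i := ⟨⟨i.val, lt_of_lt_of_le i.isLt h⟩, i.isLt⟩
  invFun x := ⟨x.1.val, x.2⟩
  left_inv i := rfl
  right_inv x := rfl

def extPerm {k m : ℕ} (h : 2 * k ≤ 2 * m) (τ : Equiv.Perm (Fin (2 * k))) :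
    Equiv.Perm (Fin (2 * m)) :=
  τ.extendDomain (loEquiv h)

lemma extPerm_apply_lt {k m : ℕ} (h : 2 * k ≤ 2 * m) (τ : Equiv.Perm (Fin (2 * k)))
    (x : Fin (2 * m)) (hx : x.val < 2 * k) :
    extPerm h τ x = ⟨(τ ⟨x.val, hx⟩).val, lt_of_lt_of_le (τ ⟨x.val, hx⟩).isLt h⟩ := by
  have := Equiv.Perm.extendDomain_apply_subtype τ (loEquiv h) (b := x) hx
  rw [extPerm, this]
  rfl

lemma extPerm_apply_ge {k m : ℕ} (h : 2 * k ≤ 2 * m) (τ : Equiv.Perm (Fin (2 * k)))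
    (x : Fin (2 * m)) (hx : ¬ x.val < 2 * k) :
    extPerm h τ x = x :=
  Equiv.Perm.extendDomain_apply_not_subtype τ (loEquiv h) hx

lemma sign_extPerm {k m : ℕ} (h : 2 * k ≤ 2 * m) (τ : Equiv.Perm (Fin (2 * k))) :
    Equiv.Perm.sign (extPerm h τ) = Equiv.Perm.sign τ :=
  Equiv.Perm.sign_extendDomain τ (loEquiv h)

/-! ### lemmas about `emb` -/

lemma emb_val {m k : ℕ} (t : Fin k → Fin m) (x : Fin (2 * k)) (hx : x.val / 2 < k) :
    (emb t x).val = 2 * (t ⟨x.val / 2, hx⟩).val + x.val % 2 := rfl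

lemma emb_strictMono {m k : ℕ} {t : Fin k → Fin m} (ht : StrictMono t) :
    StrictMono (emb t) := by
  intro x y hxy
  have hx : x.val / 2 < k := by have := x.isLt; omega
  have hy : y.val / 2 < k := by have := y.isLt; omega
  have hxy' : x.val < y.val := hxy
  rw [Fin.lt_def, emb_val t x hx, emb_val t y hy]
  by_cases hh : x.val / 2 = y.val / 2
  · have he : (⟨x.val / 2, hx⟩ : Fin k) = ⟨y.val / 2, hy⟩ := Fin.ext hh
    rw [he]
    omega
  · have h2 : x.val / 2 < y.val / 2 := by omega
    have := ht (show (⟨x.val / 2, hx⟩ : Fin k) < ⟨y.val / 2, hy⟩ from h2)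
    have : (t ⟨x.val / 2, hx⟩).val < (t ⟨y.val / 2, hy⟩).val := this
    omega

lemma emb_d0 {m k : ℕ} (t : Fin k → Fin m) (i : Fin k) : emb t (d0 i) = d0 (t i) := by
  have hx : (d0 i).val / 2 < k := by simp only [val_d0]; omega
  apply Fin.ext
  rw [emb_val t (d0 i) hx]
  have he : (⟨(d0 i).val / 2, hx⟩ : Fin k) = i := Fin.ext (by simp only [val_d0]; omega)
  rw [he]
  simp only [val_d0]; omega

lemma emb_d1 {m k : ℕ} (t : Fin k → Fin m) (i : Fin k) : emb t (d1 i) = d1 (t i) := by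
  have hx : (d1 i).val / 2 < k := by simp only [val_d1]; omega
  apply Fin.ext
  rw [emb_val t (d1 i) hx]
  have he : (⟨(d1 i).val / 2, hx⟩ : Fin k) = i := Fin.ext (by simp only [val_d1]; omega)
  rw [he]
  simp only [val_d1]; omega

/-- membership of `emb t` image is determined by blocks -/
lemma mem_emb_iff {m k : ℕ} {t : Fin k → Fin m} (ht : StrictMono t) (y : Fin (2 * m))
    (hy : y.val / 2 < m) :
    (∃ w : Fin (2 * k), emb t w = y) ↔ (⟨y.val / 2, hy⟩ : Fin m) ∈ Finset.image t Finset.univ := by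
  constructor
  · rintro ⟨w, rfl⟩
    have hw : w.val / 2 < k := by have := w.isLt; omega
    have hv := emb_val t w hw
    have : (⟨(emb t w).val / 2, hy⟩ : Fin m) = t ⟨w.val / 2, hw⟩ := by
      apply Fin.ext
      show (emb t w).val / 2 = _
      omega
    rw [this]
    exact Finset.mem_image_of_mem t (Finset.mem_univ _)
  · intro hmem
    obtain ⟨i, -, hi⟩ := Finset.mem_image.mp hmem
    rcases d0_or_d1 y hy with he | he
    · exact ⟨d0 i, by rw [emb_d0, hi, ← he]⟩
    · exact ⟨d1 i, by rw [emb_d1, hi, ← he]⟩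

/-! ### uniqueness of the sorted representative -/

lemma perm_eq_one_of_strictMono {m : ℕ} (π : Equiv.Perm (Fin m)) (h : StrictMono ⇑π) :
    π = 1 := by
  have key : ∀ (f : Equiv.Perm (Fin m)), StrictMono ⇑f → ∀ i : Fin m, i.val ≤ (f i).val := by
    intro f hf i
    have himg : (Finset.Iic i).image f ⊆ Finset.Iic (f i) := by
      intro y hy
      obtain ⟨j, hj, rfl⟩ := Finset.mem_image.mp hy
      exact Finset.mem_Iic.mpr (hf.monotone (Finset.mem_Iic.mp hj))
    have hcard := Finset.card_le_card himg
    rw [Finset.card_image_of_injective _ f.injective, Fin.card_Iic, Fin.card_Iic] at hcard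
    omega
  have hinv : StrictMono ⇑π⁻¹ := by
    intro a b hab
    rcases lt_trichotomy (π⁻¹ a) (π⁻¹ b) with h' | h' | h'
    · exact h'
    · exfalso
      have : a = b := by
        have := congrArg π h'
        simpa using this
      exact absurd hab (by simp [this])
    · exfalso
      have := h h'
      simp only [Equiv.Perm.coe_inv, Equiv.apply_symm_apply] at this
      exact absurd hab (by omega)
  apply Equiv.ext
  intro i
  show π i = i
  have h1 := key π h i
  have h2 := key π⁻¹ hinv (π i)
  simp only [Equiv.Perm.coe_inv, Equiv.symm_apply_apply] at h2
  exact Fin.ext (by omega)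

lemma perm_pair_ext {m : ℕ} (σ₁ σ₂ : Equiv.Perm (Fin (2 * m)))
    (h : ∀ j : Fin m, σ₁ (d0 j) = σ₂ (d0 j) ∧ σ₁ (d1 j) = σ₂ (d1 j)) : σ₁ = σ₂ := by
  apply Equiv.ext
  intro x
  have hx : x.val / 2 < m := by have := x.isLt; omega
  rcases d0_or_d1 x hx with he | he
  · rw [he]; exact (h _).1
  · rw [he]; exact (h _).2

lemma uniq_sorted {m : ℕ} {σ₁ σ₂ : Equiv.Perm (Fin (2 * m))}
    (h1 : σ₁ ∈ Mset m) (h2 : σ₂ ∈ Mset m) (π : Equiv.Perm (Fin m))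
    (h : ∀ j : Fin m, σ₂ (d0 j) = σ₁ (d0 (π j)) ∧ σ₂ (d1 j) = σ₁ (d1 (π j))) :
    π = 1 ∧ σ₂ = σ₁ := by
  obtain ⟨w1, f1⟩ := mem_Mset.mp h1
  obtain ⟨w2, f2⟩ := mem_Mset.mp h2
  have hπ : StrictMono ⇑π := by
    intro a b hab
    have hv : (σ₂ (d0 a)).val < (σ₂ (d0 b)).val := f2 a b hab
    rw [(h a).1, (h b).1] at hv
    rcases lt_trichotomy (π a) (π b) with h' | h' | h'
    · exact h'
    · exact absurd hv (by simp [h'])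
    · exact absurd hv (by have := f1 _ _ h'; omega)
  have hπ1 : π = 1 := perm_eq_one_of_strictMono π hπ
  refine ⟨hπ1, perm_pair_ext _ _ fun j => ?_⟩
  have := h j
  rw [hπ1] at this
  simpa using this

/-! ### enumeration基础 -/

lemma fin_image_enum {α : Type*} [LinearOrder α] (s : Finset α) {k : ℕ} (h : s.card = k) :
    Finset.image (⇑(s.orderEmbOfFin h)) Finset.univ = s := by
  apply Finset.coe_injective
  rw [Finset.coe_image, Finset.coe_univ, Set.image_univ, Finset.range_orderEmbOfFin]

lemma mem_enum_image {α : Type*} [LinearOrder α] (s : Finset α) {k : ℕ} (h : s.card = k)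
    (r : α) : (∃ i : Fin k, s.orderEmbOfFin h i = r) ↔ r ∈ s := by
  constructor
  · rintro ⟨i, rfl⟩
    exact Finset.orderEmbOfFin_mem s h i
  · intro hr
    have : r ∈ Set.range ⇑(s.orderEmbOfFin h) := by
      rw [Finset.range_orderEmbOfFin]
      exact hr
    exact this

lemma card_filter_lt {m k : ℕ} (hkm : k ≤ m) :
    (Finset.univ.filter fun x : Fin m => x.val < k).card = k := by
  have : (Finset.univ.filter fun x : Fin m => x.val < k)
      = Finset.image (Fin.castLE hkm) Finset.univ := by
    ext x
    simp only [Finset.mem_filter, Finset.mem_univ, true_and, Finset.mem_image]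
    constructor
    · intro hx
      exact ⟨⟨x.val, hx⟩, Fin.ext rfl⟩
    · rintro ⟨i, -, rfl⟩
      exact i.isLt
  rw [this, Finset.card_image_of_injective _ (Fin.castLE_injective hkm), Finset.card_univ,
    Fintype.card_fin]

/-! ### the unsorted combined permutation -/

variable {m k : ℕ}

lemma k_le_m {t : Fin k → Fin m} (ht : Function.Injective t) : k ≤ m := by
  simpa using Fintype.card_le_of_injective t ht

def Tset (t : Fin k → Fin m) : Finset (Fin m) := Finset.image t Finset.univ

lemma Tcard {t : Fin k → Fin m} (ht : Function.Injective t) : (Tset t).card = k := by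
  rw [Tset, Finset.card_image_of_injective _ ht, Finset.card_univ, Fintype.card_fin]

lemma Tc_card {t : Fin k → Fin m} (ht : Function.Injective t) : (Tset t)ᶜ.card = m - k := by
  rw [Finset.card_compl, Tcard ht, Fintype.card_fin]

def cEnum {t : Fin k → Fin m} (ht : Function.Injective t) : Fin (m - k) ↪o Fin m :=
  (Tset t)ᶜ.orderEmbOfFin (Tc_card ht)

lemma cEnum_not_mem {t : Fin k → Fin m} (ht : Function.Injective t) (i : Fin (m - k)) :
    cEnum ht i ∉ Tset t := by
  have h := Finset.orderEmbOfFin_mem ((Tset t)ᶜ) (Tc_card ht) i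
  rw [Finset.mem_compl] at h
  exact h

def rhoFun {t : Fin k → Fin m} (ht : Function.Injective t) : Fin m → Fin m := fun x =>
  if h : x.val < k then t ⟨x.val, h⟩
  else cEnum ht ⟨x.val - k, by have := x.isLt; omega⟩

lemma rhoFun_lt {t : Fin k → Fin m} (ht : Function.Injective t) (x : Fin m) (hx : x.val < k) :
    rhoFun ht x = t ⟨x.val, hx⟩ := by
  rw [rhoFun, dif_pos hx]

lemma rhoFun_ge {t : Fin k → Fin m} (ht : Function.Injective t) (x : Fin m) (hx : ¬ x.val < k) :
    rhoFun ht x = cEnum ht ⟨x.val - k, by have := x.isLt; omega⟩ := by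
  rw [rhoFun, dif_neg hx]

lemma rhoFun_inj {t : Fin k → Fin m} (ht : Function.Injective t) :
    Function.Injective (rhoFun ht) := by
  intro a b hab
  unfold rhoFun at hab
  split_ifs at hab with h1 h2 h2
  · have := ht hab
    have := congrArg Fin.val this
    exact Fin.ext (by simpa using this)
  · exfalso
    exact cEnum_not_mem ht _ (hab ▸ Finset.mem_image_of_mem t (Finset.mem_univ _))
  · exfalso
    have hm : t ⟨b.val, h2⟩ ∈ Tset t := Finset.mem_image_of_mem t (Finset.mem_univ _)
    rw [← hab] at hm
    exact absurd hm (cEnum_not_mem ht _)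
  · have := (cEnum ht).injective hab
    have := congrArg Fin.val this
    simp only at this
    exact Fin.ext (by omega)

noncomputable def rhoPerm {t : Fin k → Fin m} (ht : Function.Injective t) : Equiv.Perm (Fin m) :=
  Equiv.ofBijective _ (Finite.injective_iff_bijective.mp (rhoFun_inj ht))

lemma rhoPerm_apply {t : Fin k → Fin m} (ht : Function.Injective t) (x : Fin m) :
    rhoPerm ht x = rhoFun ht x := rfl

noncomputable def sigP {t : Fin k → Fin m} (ht : Function.Injective t) (τ : Equiv.Perm (Fin (2 * k))) :
    Equiv.Perm (Fin (2 * m)) :=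
  blow (rhoPerm ht) * extPerm (by have := k_le_m ht; omega) τ

lemma sign_sigP {t : Fin k → Fin m} (ht : Function.Injective t) (τ : Equiv.Perm (Fin (2 * k))) :
    Equiv.Perm.sign (sigP ht τ) = Equiv.Perm.sign τ := by
  rw [sigP, Equiv.Perm.sign_mul, sign_blow, sign_extPerm, one_mul]

lemma sigP_apply_lt {t : Fin k → Fin m} (ht : Function.Injective t)
    (τ : Equiv.Perm (Fin (2 * k))) (x : Fin (2 * m)) (hx : x.val < 2 * k) :
    sigP ht τ x = emb t (τ ⟨x.val, hx⟩) := by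
  have hkm : 2 * k ≤ 2 * m := by have := k_le_m ht; omega
  show blow (rhoPerm ht) (extPerm _ τ x) = _
  rw [extPerm_apply_lt _ τ x hx]
  set y : Fin (2 * k) := τ ⟨x.val, hx⟩ with hy
  have hy2 : y.val / 2 < k := by have := y.isLt; omega
  have hY : ((⟨y.val, lt_of_lt_of_le y.isLt hkm⟩ : Fin (2 * m))).val / 2 < m := by
    have := y.isLt; simp only; omega
  apply Fin.ext
  rw [blow_val _ _ hY, emb_val t y hy2, rhoPerm_apply]
  have hr : y.val / 2 < m := lt_of_lt_of_le hy2 (k_le_m ht)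
  have hrr : (⟨(⟨y.val, lt_of_lt_of_le y.isLt hkm⟩ : Fin (2 * m)).val / 2, hY⟩ : Fin m)
      = ⟨y.val / 2, hr⟩ := Fin.ext rfl
  rw [hrr, rhoFun_lt ht ⟨y.val / 2, hr⟩ hy2]

lemma sigP_d0_lt {t : Fin k → Fin m} (ht : Function.Injective t)
    (τ : Equiv.Perm (Fin (2 * k))) (j : Fin m) (hj : j.val < k) :
    sigP ht τ (d0 j) = emb t (τ (d0 ⟨j.val, hj⟩)) := by
  have hx : (d0 j).val < 2 * k := by simp only [val_d0]; omega
  rw [sigP_apply_lt ht τ (d0 j) hx]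
  have : (⟨(d0 j).val, hx⟩ : Fin (2 * k)) = d0 ⟨j.val, hj⟩ := Fin.ext rfl
  rw [this]

lemma sigP_d1_lt {t : Fin k → Fin m} (ht : Function.Injective t)
    (τ : Equiv.Perm (Fin (2 * k))) (j : Fin m) (hj : j.val < k) :
    sigP ht τ (d1 j) = emb t (τ (d1 ⟨j.val, hj⟩)) := by
  have hx : (d1 j).val < 2 * k := by simp only [val_d1]; omega
  rw [sigP_apply_lt ht τ (d1 j) hx]
  have : (⟨(d1 j).val, hx⟩ : Fin (2 * k)) = d1 ⟨j.val, hj⟩ := Fin.ext rfl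
  rw [this]

lemma sigP_d0_ge {t : Fin k → Fin m} (ht : Function.Injective t)
    (τ : Equiv.Perm (Fin (2 * k))) (j : Fin m) (hj : ¬ j.val < k) :
    sigP ht τ (d0 j) = d0 (cEnum ht ⟨j.val - k, by have := j.isLt; omega⟩) := by
  have hx : ¬ (d0 j).val < 2 * k := by simp only [val_d0]; omega
  show blow (rhoPerm ht) (extPerm _ τ (d0 j)) = _
  rw [extPerm_apply_ge _ τ _ hx, blow_d0, rhoPerm_apply, rhoFun_ge ht j hj]

lemma sigP_d1_ge {t : Fin k → Fin m} (ht : Function.Injective t)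
    (τ : Equiv.Perm (Fin (2 * k))) (j : Fin m) (hj : ¬ j.val < k) :
    sigP ht τ (d1 j) = d1 (cEnum ht ⟨j.val - k, by have := j.isLt; omega⟩) := by
  have hx : ¬ (d1 j).val < 2 * k := by simp only [val_d1]; omega
  show blow (rhoPerm ht) (extPerm _ τ (d1 j)) = _
  rw [extPerm_apply_ge _ τ _ hx, blow_d1, rhoPerm_apply, rhoFun_ge ht j hj]

/-! ### standard pair predicate -/

def stdAt {m : ℕ} (σ : Equiv.Perm (Fin (2 * m))) (j : Fin m) : Prop :=
  (σ (d0 j)).val % 2 = 0 ∧ (σ (d1 j)).val = (σ (d0 j)).val + 1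

/-! ### the forward map Φ -/

section Phi

variable {t : Fin k → Fin m} (ht : StrictMono t) (τ : Equiv.Perm (Fin (2 * k)))

noncomputable def gF : Fin m → Fin (2 * m) := fun j => sigP ht.injective τ (d0 j)

noncomputable def piS : Equiv.Perm (Fin m) := Tuple.sort (gF ht τ)

noncomputable def PhiP : Equiv.Perm (Fin (2 * m)) := sigP ht.injective τ * blow (piS ht τ)

noncomputable def PhiS : Finset (Fin m) :=
  Finset.univ.filter fun j => (piS ht τ j).val < k

lemma gF_inj : Function.Injective (gF ht τ) :=
  fun a b hab => d0_injective ((sigP ht.injective τ).injective hab)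

lemma sortg_mono : StrictMono (gF ht τ ∘ ⇑(piS ht τ)) := by
  have h1 : Monotone (gF ht τ ∘ ⇑(Tuple.sort (gF ht τ))) := Tuple.monotone_sort (gF ht τ)
  exact h1.strictMono_of_injective ((gF_inj ht τ).comp (piS ht τ).injective)

lemma sigP_within (hτ : τ ∈ Mset k) (l : Fin m) :
    (sigP ht.injective τ (d0 l)).val < (sigP ht.injective τ (d1 l)).val := by
  by_cases hl : l.val < k
  · rw [sigP_d0_lt ht.injective τ l hl, sigP_d1_lt ht.injective τ l hl]
    have hw := (mem_Mset.mp hτ).1 ⟨l.val, hl⟩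
    exact emb_strictMono ht (show τ (d0 ⟨l.val, hl⟩) < τ (d1 ⟨l.val, hl⟩) from hw)
  · rw [sigP_d0_ge ht.injective τ l hl, sigP_d1_ge ht.injective τ l hl]
    simp only [val_d0, val_d1]
    omega

lemma PhiP_d0 (j : Fin m) :
    PhiP ht τ (d0 j) = sigP ht.injective τ (d0 (piS ht τ j)) := by
  show sigP ht.injective τ (blow (piS ht τ) (d0 j)) = _
  rw [blow_d0]

lemma PhiP_d1 (j : Fin m) :
    PhiP ht τ (d1 j) = sigP ht.injective τ (d1 (piS ht τ j)) := by
  show sigP ht.injective τ (blow (piS ht τ) (d1 j)) = _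
  rw [blow_d1]

lemma PhiP_mem (hτ : τ ∈ Mset k) : PhiP ht τ ∈ Mset m := by
  refine mem_Mset.mpr ⟨fun j => ?_, fun j l hjl => ?_⟩
  · rw [PhiP_d0, PhiP_d1]
    exact sigP_within ht τ hτ _
  · rw [PhiP_d0, PhiP_d0]
    exact sortg_mono ht τ hjl

lemma sign_PhiP : Equiv.Perm.sign (PhiP ht τ) = Equiv.Perm.sign τ := by
  rw [PhiP, Equiv.Perm.sign_mul, sign_sigP, sign_blow, mul_one]

lemma PhiS_card : (PhiS ht τ).card = k := by
  have hkm : k ≤ m := k_le_m ht.injective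
  refine Eq.trans (Finset.card_bij (t := Finset.univ.filter fun x : Fin m => x.val < k)
    (fun j _ => piS ht τ j) ?_ ?_ ?_) (card_filter_lt hkm)
  · intro a ha
    simp only [PhiS, Finset.mem_filter, Finset.mem_univ, true_and] at ha ⊢
    exact ha
  · intro a _ b _ hab
    exact (piS ht τ).injective hab
  · intro b hb
    refine ⟨(piS ht τ).symm b, ?_, by simp⟩
    simp only [PhiS, Finset.mem_filter, Finset.mem_univ, true_and,
      Equiv.apply_symm_apply] at hb ⊢
    exact hb

lemma PhiS_std (j : Fin m) (hj : j ∉ PhiS ht τ) : stdAt (PhiP ht τ) j := by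
  have hge : ¬ (piS ht τ j).val < k := by
    simpa [PhiS] using hj
  constructor
  · rw [PhiP_d0, sigP_d0_ge ht.injective τ _ hge]
    simp only [val_d0]
    omega
  · rw [PhiP_d0, PhiP_d1, sigP_d0_ge ht.injective τ _ hge, sigP_d1_ge ht.injective τ _ hge]
    simp only [val_d0, val_d1]

lemma g_mono_low (hτ : τ ∈ Mset k) {a b : Fin m} (ha : a.val < k) (hb : b.val < k)
    (hab : a < b) : gF ht τ a < gF ht τ b := by
  show sigP ht.injective τ (d0 a) < sigP ht.injective τ (d0 b)
  rw [sigP_d0_lt ht.injective τ a ha, sigP_d0_lt ht.injective τ b hb]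
  have := (mem_Mset.mp hτ).2 ⟨a.val, ha⟩ ⟨b.val, hb⟩ (Fin.mk_lt_mk.mpr hab)
  exact emb_strictMono ht (show τ (d0 ⟨a.val, ha⟩) < τ (d0 ⟨b.val, hb⟩) from this)

lemma pi_u (hτ : τ ∈ Mset k) (i : Fin k) :
    piS ht τ ((PhiS ht τ).orderEmbOfFin (PhiS_card ht τ) i)
      = ⟨i.val, lt_of_lt_of_le i.isLt (k_le_m ht.injective)⟩ := by
  have hkm : k ≤ m := k_le_m ht.injective
  set u := (PhiS ht τ).orderEmbOfFin (PhiS_card ht τ) with hu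
  set F := Finset.univ.filter fun x : Fin m => x.val < k with hF
  have hFc : F.card = k := card_filter_lt hkm
  have humem : ∀ i : Fin k, u i ∈ PhiS ht τ := fun i =>
    Finset.orderEmbOfFin_mem (PhiS ht τ) (PhiS_card ht τ) i
  have hulow : ∀ i : Fin k, (piS ht τ (u i)).val < k := by
    intro i
    have := humem i
    simpa [PhiS] using this
  have hv : StrictMono (fun i : Fin k => piS ht τ (u i)) := by
    intro a b hab
    have hu2 : u a < u b := u.strictMono hab
    have hgg : gF ht τ (piS ht τ (u a)) < gF ht τ (piS ht τ (u b)) := sortg_mono ht τ hu2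
    rcases lt_trichotomy (piS ht τ (u a)) (piS ht τ (u b)) with h' | h' | h'
    · exact h'
    · exact absurd hgg (by rw [h']; exact lt_irrefl _)
    · exact absurd hgg (not_lt_of_gt (g_mono_low ht τ hτ (hulow b) (hulow a) h'))
  have hvmem : ∀ i : Fin k, piS ht τ (u i) ∈ F := by
    intro i
    simp only [hF, Finset.mem_filter, Finset.mem_univ, true_and]
    exact hulow i
  have h1 : (fun i : Fin k => piS ht τ (u i)) = ⇑(F.orderEmbOfFin hFc) :=
    Finset.orderEmbOfFin_unique hFc hvmem hv
  have hc : StrictMono (fun i : Fin k => (⟨i.val, lt_of_lt_of_le i.isLt hkm⟩ : Fin m)) :=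
    fun a b hab => Fin.mk_lt_mk.mpr hab
  have hcmem : ∀ i : Fin k, (⟨i.val, lt_of_lt_of_le i.isLt hkm⟩ : Fin m) ∈ F := by
    intro i
    simp only [hF, Finset.mem_filter, Finset.mem_univ, true_and]
    exact i.isLt
  have h2 : (fun i : Fin k => (⟨i.val, lt_of_lt_of_le i.isLt hkm⟩ : Fin m))
      = ⇑(F.orderEmbOfFin hFc) := Finset.orderEmbOfFin_unique hFc hcmem hc
  exact (congrFun h1 i).trans (congrFun h2 i).symm

lemma PhiKey (hτ : τ ∈ Mset k) (x : Fin (2 * k)) :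
    PhiP ht τ (emb (⇑((PhiS ht τ).orderEmbOfFin (PhiS_card ht τ))) x) = emb t (τ x) := by
  set u := ⇑((PhiS ht τ).orderEmbOfFin (PhiS_card ht τ)) with hu
  have hkm : k ≤ m := k_le_m ht.injective
  have hx2 : x.val / 2 < k := by have := x.isLt; omega
  have hxm : x.val < 2 * m := by have := x.isLt; omega
  have hux2 : (emb u x).val / 2 < m := by have := (emb u x).isLt; omega
  have hevx := emb_val u x hx2
  have hb : blow (piS ht τ) (emb u x) = ⟨x.val, hxm⟩ := by
    apply Fin.ext
    rw [blow_val _ _ hux2]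
    have h1 : (⟨(emb u x).val / 2, hux2⟩ : Fin m) = u ⟨x.val / 2, hx2⟩ :=
      Fin.ext (by show (emb u x).val / 2 = _; omega)
    rw [h1]
    have h2 := pi_u ht τ hτ ⟨x.val / 2, hx2⟩
    rw [← hu] at h2
    rw [h2]
    simp only
    omega
  show sigP ht.injective τ (blow (piS ht τ) (emb u x)) = _
  rw [hb, sigP_apply_lt ht.injective τ ⟨x.val, hxm⟩ (by simpa using x.isLt)]

lemma PhiS_image : PhiS ht τ
    = Finset.image (⇑((PhiS ht τ).orderEmbOfFin (PhiS_card ht τ))) Finset.univ := by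
  ext r
  simp only [Finset.mem_image, Finset.mem_univ, true_and]
  exact (mem_enum_image _ _ r).symm

end Phi

/-! ### recovering the data from a marked permutation -/

def blockOf {m : ℕ} (x : Fin (2 * m)) : Fin m := ⟨x.val / 2, by have := x.isLt; omega⟩

@[simp] lemma blockOf_d0 {m : ℕ} (r : Fin m) : blockOf (d0 r) = r :=
  Fin.ext (by show (d0 r).val / 2 = r.val; simp only [val_d0]; omega)

@[simp] lemma blockOf_d1 {m : ℕ} (r : Fin m) : blockOf (d1 r) = r :=
  Fin.ext (by show (d1 r).val / 2 = r.val; simp only [val_d1]; omega)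

lemma blockOf_cases {m : ℕ} (x : Fin (2 * m)) : x = d0 (blockOf x) ∨ x = d1 (blockOf x) :=
  d0_or_d1 x (by have := x.isLt; omega)

lemma blockOf_emb {m k : ℕ} (t : Fin k → Fin m) (x : Fin (2 * k)) (hx : x.val / 2 < k) :
    blockOf (emb t x) = t ⟨x.val / 2, hx⟩ := by
  apply Fin.ext
  show (emb t x).val / 2 = _
  have := emb_val t x hx
  omega

section Recover

variable (σ : Equiv.Perm (Fin (2 * m))) (S : Finset (Fin m))

def Pset : Finset (Fin (2 * m)) :=
  Finset.univ.filter fun y => blockOf (σ.symm y) ∈ S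

lemma mem_Pset (y : Fin (2 * m)) : y ∈ Pset σ S ↔ blockOf (σ.symm y) ∈ S := by
  simp [Pset]

def TsetR : Finset (Fin m) := Finset.univ.filter fun r => d0 r ∈ Pset σ S

lemma mem_TsetR (r : Fin m) : r ∈ TsetR σ S ↔ d0 r ∈ Pset σ S := by
  simp [TsetR]

lemma sigma_mem_Pset (x : Fin (2 * m)) : σ x ∈ Pset σ S ↔ blockOf x ∈ S := by
  rw [mem_Pset, Equiv.symm_apply_apply]

variable {σ S}

lemma inv_cases (σ : Equiv.Perm (Fin (2 * m))) (y : Fin (2 * m)) :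
    σ (d0 (blockOf (σ.symm y))) = y ∨ σ (d1 (blockOf (σ.symm y))) = y := by
  rcases blockOf_cases (σ.symm y) with he | he
  · left; rw [← he, Equiv.apply_symm_apply]
  · right; rw [← he, Equiv.apply_symm_apply]

lemma d1_mem_Pset (hstd : ∀ j, j ∉ S → stdAt σ j) (r : Fin m) :
    d1 r ∈ Pset σ S ↔ d0 r ∈ Pset σ S := by
  constructor
  · intro h1
    rw [mem_Pset]
    by_contra hjS
    obtain ⟨hev, hsucc⟩ := hstd _ hjS
    rcases inv_cases σ (d0 r) with e0 | e1
    · have v0 := congrArg Fin.val e0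
      rw [val_d0] at v0
      have e1 : σ (d1 (blockOf (σ.symm (d0 r)))) = d1 r := Fin.ext (by rw [val_d1]; omega)
      have hb : blockOf (σ.symm (d1 r)) = blockOf (σ.symm (d0 r)) := by
        rw [← e1, Equiv.symm_apply_apply, blockOf_d1]
      have hmem := (mem_Pset σ S _).mp h1
      rw [hb] at hmem
      exact hjS hmem
    · have v1 := congrArg Fin.val e1
      rw [val_d0] at v1
      omega
  · intro h0
    rw [mem_Pset]
    by_contra hjS
    obtain ⟨hev, hsucc⟩ := hstd _ hjS
    rcases inv_cases σ (d1 r) with e0 | e1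
    · have v0 := congrArg Fin.val e0
      rw [val_d1] at v0
      omega
    · have v1 := congrArg Fin.val e1
      rw [val_d1] at v1
      have e0 : σ (d0 (blockOf (σ.symm (d1 r)))) = d0 r := Fin.ext (by rw [val_d0]; omega)
      have hb : blockOf (σ.symm (d0 r)) = blockOf (σ.symm (d1 r)) := by
        rw [← e0, Equiv.symm_apply_apply, blockOf_d0]
      have hmem := (mem_Pset σ S _).mp h0
      rw [hb] at hmem
      exact hjS hmem

lemma mem_Pset_block (hstd : ∀ j, j ∉ S → stdAt σ j) (y : Fin (2 * m)) :
    y ∈ Pset σ S ↔ blockOf y ∈ TsetR σ S := by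
  rcases blockOf_cases y with he | he
  · rw [he, blockOf_d0, mem_TsetR]
  · rw [he, blockOf_d1, mem_TsetR]
    exact d1_mem_Pset hstd _

lemma card_block_filter (W : Finset (Fin m)) :
    (Finset.univ.filter fun x : Fin (2 * m) => blockOf x ∈ W).card = 2 * W.card := by
  have hset : (Finset.univ.filter fun x : Fin (2 * m) => blockOf x ∈ W)
      = W.biUnion (fun j => {d0 j, d1 j}) := by
    ext x
    simp only [Finset.mem_filter, Finset.mem_univ, true_and, Finset.mem_biUnion,
      Finset.mem_insert, Finset.mem_singleton]
    constructor
    · intro hx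
      exact ⟨blockOf x, hx, blockOf_cases x⟩
    · rintro ⟨j, hj, h | h⟩
      · rw [h, blockOf_d0]; exact hj
      · rw [h, blockOf_d1]; exact hj
  rw [hset, Finset.card_biUnion]
  · have : ∀ j : Fin m, ({d0 j, d1 j} : Finset (Fin (2 * m))).card = 2 := by
      intro j
      rw [Finset.card_insert_of_notMem (by
        simp only [Finset.mem_singleton]
        intro h
        have := congrArg Fin.val h
        simp only [val_d0, val_d1] at this
        omega), Finset.card_singleton]
    rw [Finset.sum_congr rfl (fun j _ => this j), Finset.sum_const, smul_eq_mul, mul_comm]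
  · intro a _ b _ hab
    simp only [Finset.disjoint_left, Finset.mem_insert, Finset.mem_singleton]
    rintro x (rfl | rfl) h'
    · rcases h' with h' | h'
      · exact hab (d0_injective h')
      · have := congrArg Fin.val h'
        simp only [val_d0, val_d1] at this
        omega
    · rcases h' with h' | h'
      · have := congrArg Fin.val h'
        simp only [val_d0, val_d1] at this
        omega
      · have := congrArg Fin.val h'
        simp only [val_d1] at this
        exact hab (Fin.ext (by omega))

lemma Pset_card : (Pset σ S).card = 2 * S.card := by
  have : Pset σ S = Finset.image σ (Finset.univ.filter fun x : Fin (2 * m) => blockOf x ∈ S) := by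
    ext y
    simp only [mem_Pset, Finset.mem_image, Finset.mem_filter, Finset.mem_univ, true_and]
    constructor
    · intro h
      exact ⟨σ.symm y, h, Equiv.apply_symm_apply σ y⟩
    · rintro ⟨x, hx, rfl⟩
      rw [Equiv.symm_apply_apply]
      exact hx
  rw [this, Finset.card_image_of_injective _ σ.injective, card_block_filter]

lemma TsetR_card (hstd : ∀ j, j ∉ S → stdAt σ j) (hcard : S.card = k) :
    (TsetR σ S).card = k := by
  have h1 : Pset σ S = Finset.univ.filter fun y : Fin (2 * m) => blockOf y ∈ TsetR σ S := by
    ext y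
    simp only [Finset.mem_filter, Finset.mem_univ, true_and]
    exact mem_Pset_block hstd y
  have h2 := Pset_card (σ := σ) (S := S)
  rw [h1, card_block_filter, hcard] at h2
  omega

end Recover

/-! ### reconstruction -/

lemma enum_congr {α : Type*} [LinearOrder α] {s s' : Finset α} (h : s = s') {n : ℕ}
    (hc : s.card = n) (hc' : s'.card = n) (i : Fin n) :
    s.orderEmbOfFin hc i = s'.orderEmbOfFin hc' i := by
  subst h
  rfl

lemma Tset_enum (s : Finset (Fin m)) (hc : s.card = k) :
    Tset (⇑(s.orderEmbOfFin hc)) = s := by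
  ext r
  simp only [Tset, Finset.mem_image, Finset.mem_univ, true_and]
  exact mem_enum_image s hc r

lemma compl_card {s : Finset (Fin m)} (h : s.card = k) : sᶜ.card = m - k := by
  rw [Finset.card_compl, h, Fintype.card_fin]

section Recover2

variable {σ : Equiv.Perm (Fin (2 * m))} {S : Finset (Fin m)}

lemma key_exists (hstd : ∀ j, j ∉ S → stdAt σ j) (hcard : S.card = k) (x : Fin (2 * k)) :
    ∃ w : Fin (2 * k),
      emb (⇑((TsetR σ S).orderEmbOfFin (TsetR_card hstd hcard))) w
        = σ (emb (⇑(S.orderEmbOfFin hcard)) x) := by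
  have hx2 : x.val / 2 < k := by have := x.isLt; omega
  have hyP : σ (emb (⇑(S.orderEmbOfFin hcard)) x) ∈ Pset σ S := by
    rw [sigma_mem_Pset, blockOf_emb _ x hx2]
    exact Finset.orderEmbOfFin_mem S hcard _
  have hyT := (mem_Pset_block hstd _).mp hyP
  have hy : (σ (emb (⇑(S.orderEmbOfFin hcard)) x)).val / 2 < m := by
    have := (σ (emb (⇑(S.orderEmbOfFin hcard)) x)).isLt; omega
  apply (mem_emb_iff ((TsetR σ S).orderEmbOfFin (TsetR_card hstd hcard)).strictMono _ hy).mpr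
  have himg : Finset.image (⇑((TsetR σ S).orderEmbOfFin (TsetR_card hstd hcard))) Finset.univ
      = TsetR σ S := Tset_enum _ _
  rw [himg]
  exact hyT

lemma P_of_key {k : ℕ} {σ' : Equiv.Perm (Fin (2 * m))} {S' : Finset (Fin m)}
    (hcard' : S'.card = k) {t' : Fin k → Fin m} (ht' : StrictMono t')
    (τ' : Equiv.Perm (Fin (2 * k)))
    (hkey : ∀ x, σ' (emb (⇑(S'.orderEmbOfFin hcard')) x) = emb t' (τ' x)) :
    Pset σ' S' = Finset.univ.filter fun y => blockOf y ∈ Finset.image t' Finset.univ := by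
  ext y
  rw [mem_Pset]
  simp only [Finset.mem_filter, Finset.mem_univ, true_and]
  have hy1 : (σ'.symm y).val / 2 < m := by have := (σ'.symm y).isLt; omega
  have hy2 : y.val / 2 < m := by have := y.isLt; omega
  have himg_eq : Finset.image (⇑(S'.orderEmbOfFin hcard')) Finset.univ = S' :=
    Tset_enum S' hcard'
  have step1 : blockOf (σ'.symm y) ∈ S'
      ↔ ∃ w, emb (⇑(S'.orderEmbOfFin hcard')) w = σ'.symm y := by
    rw [show blockOf (σ'.symm y) = (⟨(σ'.symm y).val / 2, hy1⟩ : Fin m) from rfl]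
    conv_lhs => rw [← himg_eq]
    exact (mem_emb_iff ((S'.orderEmbOfFin hcard')).strictMono _ hy1).symm
  rw [step1]
  have step2 : (∃ w, emb (⇑(S'.orderEmbOfFin hcard')) w = σ'.symm y)
      ↔ ∃ w, emb t' (τ' w) = y := by
    constructor
    · rintro ⟨w, hw⟩
      refine ⟨w, ?_⟩
      rw [← hkey w, hw, Equiv.apply_symm_apply]
    · rintro ⟨w, hw⟩
      refine ⟨w, ?_⟩
      rw [← hkey w] at hw
      rw [← hw, Equiv.symm_apply_apply]
  rw [step2]
  have step3 : (∃ w, emb t' (τ' w) = y) ↔ ∃ v, emb t' v = y := by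
    constructor
    · rintro ⟨w, hw⟩; exact ⟨τ' w, hw⟩
    · rintro ⟨v, hv⟩; exact ⟨τ'.symm v, by rw [Equiv.apply_symm_apply]; exact hv⟩
  rw [step3]
  rw [show blockOf y = (⟨y.val / 2, hy2⟩ : Fin m) from rfl]
  exact mem_emb_iff ht' y hy2

lemma offs (hσ : σ ∈ Mset m) (hstd : ∀ j, j ∉ S → stdAt σ j) (hcard : S.card = k)
    (i : Fin (m - k)) :
    σ (d0 (Sᶜ.orderEmbOfFin (compl_card hcard) i))
        = d0 ((TsetR σ S)ᶜ.orderEmbOfFin (compl_card (TsetR_card hstd hcard)) i) ∧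
    σ (d1 (Sᶜ.orderEmbOfFin (compl_card hcard) i))
        = d1 ((TsetR σ S)ᶜ.orderEmbOfFin (compl_card (TsetR_card hstd hcard)) i) := by
  set u' := Sᶜ.orderEmbOfFin (compl_card hcard) with hu'
  have hnot : ∀ i : Fin (m - k), u' i ∉ S := by
    intro i
    have := Finset.orderEmbOfFin_mem (Sᶜ) (compl_card hcard) i
    rw [Finset.mem_compl] at this
    exact this
  have hstd' : ∀ i : Fin (m - k), stdAt σ (u' i) := fun i => hstd _ (hnot i)
  have h0 : ∀ i : Fin (m - k), σ (d0 (u' i)) = d0 (blockOf (σ (d0 (u' i)))) := by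
    intro i
    obtain ⟨hev, _⟩ := hstd' i
    apply Fin.ext
    rw [val_d0]
    show _ = 2 * ((σ (d0 (u' i))).val / 2)
    omega
  have h1 : ∀ i : Fin (m - k), σ (d1 (u' i)) = d1 (blockOf (σ (d0 (u' i)))) := by
    intro i
    obtain ⟨hev, hsucc⟩ := hstd' i
    apply Fin.ext
    rw [val_d1]
    show _ = 2 * ((σ (d0 (u' i))).val / 2) + 1
    omega
  have hβmono : StrictMono (fun i => blockOf (σ (d0 (u' i)))) := by
    intro a b hab
    have h2 := (mem_Mset.mp hσ).2 (u' a) (u' b) (u'.strictMono hab)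
    show (blockOf (σ (d0 (u' a)))).val < (blockOf (σ (d0 (u' b)))).val
    show (σ (d0 (u' a))).val / 2 < (σ (d0 (u' b))).val / 2
    have hva := congrArg Fin.val (h0 a)
    have hvb := congrArg Fin.val (h0 b)
    rw [val_d0] at hva hvb
    omega
  have hβmem : ∀ i : Fin (m - k), blockOf (σ (d0 (u' i))) ∈ (TsetR σ S)ᶜ := by
    intro i
    rw [Finset.mem_compl, mem_TsetR]
    intro hmem
    rw [← h0 i, sigma_mem_Pset, blockOf_d0] at hmem
    exact hnot i hmem
  have hβ := Finset.orderEmbOfFin_unique (compl_card (TsetR_card hstd hcard)) hβmem hβmono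
  constructor
  · rw [h0 i, congrFun hβ i]
  · rw [h1 i, congrFun hβ i]

set_option maxHeartbeats 2000000 in
lemma reconstruct (hσ : σ ∈ Mset m) (hstd : ∀ j, j ∉ S → stdAt σ j) (hcard : S.card = k) :
    ∃ (t : Fin k → Fin m) (ht : StrictMono t) (τ : Equiv.Perm (Fin (2 * k))),
      τ ∈ Mset k ∧ PhiP ht τ = σ ∧ PhiS ht τ = S := by
  classical
  set t := ⇑((TsetR σ S).orderEmbOfFin (TsetR_card hstd hcard)) with htdef
  have ht : StrictMono t := ((TsetR σ S).orderEmbOfFin (TsetR_card hstd hcard)).strictMono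
  set u := ⇑(S.orderEmbOfFin hcard) with hudef
  have hu : StrictMono u := (S.orderEmbOfFin hcard).strictMono
  let f : Fin (2 * k) → Fin (2 * k) := fun x => (key_exists hstd hcard x).choose
  have hf : ∀ x, emb t (f x) = σ (emb u x) := fun x => (key_exists hstd hcard x).choose_spec
  have hfinj : Function.Injective f := by
    intro a b hab
    have : emb t (f a) = emb t (f b) := congrArg (emb t) hab
    rw [hf a, hf b] at this
    exact (emb_strictMono hu).injective (σ.injective this)
  let τ : Equiv.Perm (Fin (2 * k)) := Equiv.ofBijective f (Finite.injective_iff_bijective.mp hfinj)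
  have hτap : ∀ x, τ x = f x := fun x => rfl
  have hτspec : ∀ x, emb t (τ x) = σ (emb u x) := hf
  have hτmem : τ ∈ Mset k := by
    refine mem_Mset.mpr ⟨fun i => ?_, fun i l hil => ?_⟩
    · have hw := (mem_Mset.mp hσ).1 (u i)
      have e0 : σ (d0 (u i)) = emb t (τ (d0 i)) := by rw [hτspec, emb_d0]
      have e1 : σ (d1 (u i)) = emb t (τ (d1 i)) := by rw [hτspec, emb_d1]
      rw [e0, e1] at hw
      exact (emb_strictMono ht).lt_iff_lt.mp hw
    · have hw := (mem_Mset.mp hσ).2 (u i) (u l) (hu hil)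
      have e0 : σ (d0 (u i)) = emb t (τ (d0 i)) := by rw [hτspec, emb_d0]
      have e1 : σ (d0 (u l)) = emb t (τ (d0 l)) := by rw [hτspec, emb_d0]
      rw [e0, e1] at hw
      exact (emb_strictMono ht).lt_iff_lt.mp hw
  refine ⟨t, ht, τ, hτmem, ?_⟩
  set σ₂ := PhiP ht τ with hσ₂
  set S₂ := PhiS ht τ with hS₂
  have hσ₂mem : σ₂ ∈ Mset m := PhiP_mem ht τ hτmem
  have hstd₂ : ∀ j, j ∉ S₂ → stdAt σ₂ j := fun j hj => PhiS_std ht τ j hj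
  have hcard₂ : S₂.card = k := PhiS_card ht τ
  have hP2 : Pset σ₂ S₂ = Pset σ S := by
    rw [P_of_key hcard₂ ht τ (fun x => PhiKey ht τ hτmem x),
      P_of_key hcard ht τ (fun x => (hτspec x).symm)]
  have hT2 : TsetR σ₂ S₂ = TsetR σ S := by
    ext r
    rw [mem_TsetR, mem_TsetR, hP2]
  have huinj : Function.Injective u := hu.injective
  have hu₂inj : Function.Injective ⇑(S₂.orderEmbOfFin hcard₂) :=
    (S₂.orderEmbOfFin hcard₂).strictMono.injective
  set u₂ := ⇑(S₂.orderEmbOfFin hcard₂) with hu₂def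
  have hclaim : ∀ x : Fin m,
      σ₂ (d0 (rhoPerm hu₂inj x)) = σ (d0 (rhoPerm huinj x)) ∧
      σ₂ (d1 (rhoPerm hu₂inj x)) = σ (d1 (rhoPerm huinj x)) := by
    intro x
    by_cases hx : x.val < k
    · rw [rhoPerm_apply, rhoFun_lt hu₂inj x hx, rhoPerm_apply, rhoFun_lt huinj x hx]
      constructor
      · rw [← emb_d0 u₂, ← emb_d0 u, PhiKey ht τ hτmem, hτspec]
      · rw [← emb_d1 u₂, ← emb_d1 u, PhiKey ht τ hτmem, hτspec]
    · rw [rhoPerm_apply, rhoFun_ge hu₂inj x hx, rhoPerm_apply, rhoFun_ge huinj x hx]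
      have hc2 : ∀ i, cEnum hu₂inj i = S₂ᶜ.orderEmbOfFin (compl_card hcard₂) i := by
        intro i
        exact enum_congr (by rw [Tset_enum]) _ _ i
      have hc1 : ∀ i, cEnum huinj i = Sᶜ.orderEmbOfFin (compl_card hcard) i := by
        intro i
        exact enum_congr (by rw [Tset_enum]) _ _ i
      have ho2 := offs hσ₂mem hstd₂ hcard₂ ⟨x.val - k, by have := x.isLt; omega⟩
      have ho1 := offs hσ hstd hcard ⟨x.val - k, by have := x.isLt; omega⟩
      have hTc : ∀ i, (TsetR σ₂ S₂)ᶜ.orderEmbOfFin (compl_card (TsetR_card hstd₂ hcard₂)) i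
          = (TsetR σ S)ᶜ.orderEmbOfFin (compl_card (TsetR_card hstd hcard)) i := by
        intro i
        exact enum_congr (by rw [hT2]) _ _ i
      constructor
      · rw [hc2, hc1, ho2.1, ho1.1, hTc]
      · rw [hc2, hc1, ho2.2, ho1.2, hTc]
  have huniq := uniq_sorted hσ hσ₂mem (rhoPerm huinj * (rhoPerm hu₂inj)⁻¹)
    (fun j => by
      obtain ⟨c0, c1⟩ := hclaim ((rhoPerm hu₂inj)⁻¹ j)
      rw [show ∀ x, rhoPerm hu₂inj ((rhoPerm hu₂inj)⁻¹ x) = x from fun x => (rhoPerm hu₂inj).apply_symm_apply x] at c0 c1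
      exact ⟨c0, c1⟩)
  refine ⟨huniq.2, ?_⟩
  have hrho : rhoPerm huinj = rhoPerm hu₂inj := by
    have h1 := huniq.1
    rwa [mul_inv_eq_one] at h1
  ext j
  constructor
  · intro hj
    obtain ⟨i, hi⟩ := (mem_enum_image S₂ hcard₂ j).mpr hj
    have : u₂ i = u i := by
      have e2 : rhoPerm hu₂inj ⟨i.val, lt_of_lt_of_le i.isLt (k_le_m huinj)⟩ = u₂ i := by
        rw [rhoPerm_apply, rhoFun_lt hu₂inj _ i.isLt]
      have e1 : rhoPerm huinj ⟨i.val, lt_of_lt_of_le i.isLt (k_le_m huinj)⟩ = u i := by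
        rw [rhoPerm_apply, rhoFun_lt huinj _ i.isLt]
      rw [← e2, ← e1, hrho]
    rw [← hi]
    show u₂ i ∈ S
    rw [this]
    exact Finset.orderEmbOfFin_mem S hcard i
  · intro hj
    obtain ⟨i, hi⟩ := (mem_enum_image S hcard j).mpr hj
    have : u₂ i = u i := by
      have e2 : rhoPerm hu₂inj ⟨i.val, lt_of_lt_of_le i.isLt (k_le_m huinj)⟩ = u₂ i := by
        rw [rhoPerm_apply, rhoFun_lt hu₂inj _ i.isLt]
      have e1 : rhoPerm huinj ⟨i.val, lt_of_lt_of_le i.isLt (k_le_m huinj)⟩ = u i := by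
        rw [rhoPerm_apply, rhoFun_lt huinj _ i.isLt]
      rw [← e2, ← e1, hrho]
    rw [← hi]
    show u i ∈ S₂
    rw [← this]
    exact Finset.orderEmbOfFin_mem S₂ hcard₂ i

end Recover2

/-! ### injectivity of Φ and the value computation -/

lemma mem_Tset_iff {t : Fin k → Fin m} (ht : StrictMono t) (r : Fin m) :
    r ∈ Tset t ↔ ∃ w, emb t w = d0 r := by
  have hy : (d0 r).val / 2 < m := by have := r.isLt; simp only [val_d0]; omega
  have h := mem_emb_iff ht (d0 r) hy
  rw [show (⟨(d0 r).val / 2, hy⟩ : Fin m) = r from Fin.ext (by simp only [val_d0]; omega)] at h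
  exact h.symm

lemma Phi_inj {t₁ t₂ : Fin k → Fin m} (ht₁ : StrictMono t₁) (ht₂ : StrictMono t₂)
    {τ₁ τ₂ : Equiv.Perm (Fin (2 * k))} (hτ₁ : τ₁ ∈ Mset k) (hτ₂ : τ₂ ∈ Mset k)
    (hP : PhiP ht₁ τ₁ = PhiP ht₂ τ₂) (hS : PhiS ht₁ τ₁ = PhiS ht₂ τ₂) :
    t₁ = t₂ ∧ τ₁ = τ₂ := by
  have hkey₁ := PhiKey ht₁ τ₁ hτ₁
  have hkey₂ := PhiKey ht₂ τ₂ hτ₂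
  have hufun : (⇑((PhiS ht₁ τ₁).orderEmbOfFin (PhiS_card ht₁ τ₁)) : Fin k → Fin m)
      = ⇑((PhiS ht₂ τ₂).orderEmbOfFin (PhiS_card ht₂ τ₂)) :=
    funext (fun i => enum_congr hS _ _ i)
  have H : ∀ x, emb t₁ (τ₁ x) = emb t₂ (τ₂ x) := by
    intro x
    rw [← hkey₁ x, hP, hufun, hkey₂ x]
  have hT : Tset t₁ = Tset t₂ := by
    ext r
    rw [mem_Tset_iff ht₁, mem_Tset_iff ht₂]
    constructor
    · rintro ⟨w, hw⟩
      exact ⟨τ₂ (τ₁.symm w), by rw [← H (τ₁.symm w), Equiv.apply_symm_apply]; exact hw⟩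
    · rintro ⟨w, hw⟩
      exact ⟨τ₁ (τ₂.symm w), by rw [H (τ₂.symm w), Equiv.apply_symm_apply]; exact hw⟩
  have ht12 : t₁ = t₂ := by
    have h1 : t₁ = ⇑((Tset t₁).orderEmbOfFin (Tcard ht₁.injective)) :=
      Finset.orderEmbOfFin_unique _ (fun i => Finset.mem_image_of_mem t₁ (Finset.mem_univ i)) ht₁
    have h2 : t₂ = ⇑((Tset t₂).orderEmbOfFin (Tcard ht₂.injective)) :=
      Finset.orderEmbOfFin_unique _ (fun i => Finset.mem_image_of_mem t₂ (Finset.mem_univ i)) ht₂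
    rw [h1, h2]
    funext i
    exact enum_congr hT _ _ i
  subst ht12
  refine ⟨rfl, Equiv.ext fun x => ?_⟩
  exact (emb_strictMono ht₁).injective (H x)

lemma Phi_prod (B : Matrix (Fin (2 * m)) (Fin (2 * m)) R) {t : Fin k → Fin m}
    (ht : StrictMono t) (τ : Equiv.Perm (Fin (2 * k))) (hτ : τ ∈ Mset k) :
    ∏ j ∈ PhiS ht τ, B (PhiP ht τ (d0 j)) (PhiP ht τ (d1 j))
      = ∏ i : Fin k, B (emb t (τ (d0 i))) (emb t (τ (d1 i))) := by
  rw [PhiS_image ht τ]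
  rw [Finset.prod_image (fun a _ b _ hab =>
    ((PhiS ht τ).orderEmbOfFin (PhiS_card ht τ)).strictMono.injective hab)]
  apply Finset.prod_congr rfl
  intro i _
  rw [← emb_d0 (⇑((PhiS ht τ).orderEmbOfFin (PhiS_card ht τ))) i,
    ← emb_d1 (⇑((PhiS ht τ).orderEmbOfFin (PhiS_card ht τ))) i,
    PhiKey ht τ hτ, PhiKey ht τ hτ]

lemma per_k (B : Matrix (Fin (2 * m)) (Fin (2 * m)) R) (z : R) :
    ∑ p ∈ Finset.univ.filter (fun p : Equiv.Perm (Fin (2 * m)) × Finset (Fin m) =>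
        p.1 ∈ Mset m ∧ (∀ j, j ∉ p.2 → stdAt p.1 j) ∧ p.2.card = k),
      ((Equiv.Perm.sign p.1 : ℤ) : R) * (z ^ p.2.card * ∏ j ∈ p.2, B (p.1 (d0 j)) (p.1 (d1 j)))
    = z ^ k * ∑ t ∈ Finset.univ.filter (fun t : Fin k → Fin m => StrictMono t),
        pf (blockSub B t) := by
  classical
  rw [Finset.mul_sum]
  have h1 : ∀ t ∈ Finset.univ.filter (fun t : Fin k → Fin m => StrictMono t),
      z ^ k * pf (blockSub B t)
        = ∑ τ ∈ Mset k, ((Equiv.Perm.sign τ : ℤ) : R)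
            * (z ^ k * ∏ i : Fin k, B (emb t (τ (d0 i))) (emb t (τ (d1 i)))) := by
    intro t _
    rw [pf_eq (blockSub B t), Finset.mul_sum]
    apply Finset.sum_congr rfl
    intro τ _
    have hbs : ∀ i : Fin k, blockSub B t (τ (d0 i)) (τ (d1 i))
        = B (emb t (τ (d0 i))) (emb t (τ (d1 i))) := fun i => rfl
    rw [Finset.prod_congr rfl (fun i _ => hbs i)]
    ring
  rw [Finset.sum_congr rfl h1, ← Finset.sum_product']
  set s := (Finset.univ.filter fun t : Fin k → Fin m => StrictMono t) ×ˢ Mset k with hs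
  have hst : ∀ a ∈ s, StrictMono a.1 :=
    fun a ha => (Finset.mem_filter.mp (Finset.mem_product.mp ha).1).2
  have hmt : ∀ a ∈ s, a.2 ∈ Mset k := fun a ha => (Finset.mem_product.mp ha).2
  refine (Finset.sum_bij (fun a ha => (PhiP (hst a ha) a.2, PhiS (hst a ha) a.2))
    ?_ ?_ ?_ ?_).symm
  · intro a ha
    refine Finset.mem_filter.mpr ⟨Finset.mem_univ _,
      PhiP_mem (hst a ha) a.2 (hmt a ha), fun j hj => PhiS_std (hst a ha) a.2 j hj,
      PhiS_card (hst a ha) a.2⟩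
  · intro a₁ ha₁ a₂ ha₂ heq
    have hP : PhiP (hst a₁ ha₁) a₁.2 = PhiP (hst a₂ ha₂) a₂.2 := congrArg Prod.fst heq
    have hSe : PhiS (hst a₁ ha₁) a₁.2 = PhiS (hst a₂ ha₂) a₂.2 := congrArg Prod.snd heq
    obtain ⟨ht12, hτ12⟩ := Phi_inj (hst a₁ ha₁) (hst a₂ ha₂) (hmt a₁ ha₁) (hmt a₂ ha₂) hP hSe
    exact Prod.ext ht12 hτ12
  · intro b hb
    obtain ⟨-, hbM, hbstd, hbcard⟩ := Finset.mem_filter.mp hb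
    obtain ⟨t, ht, τ, hτ, hPh, hSh⟩ := reconstruct hbM hbstd hbcard
    have ha : (t, τ) ∈ s :=
      Finset.mem_product.mpr ⟨Finset.mem_filter.mpr ⟨Finset.mem_univ _, ht⟩, hτ⟩
    refine ⟨(t, τ), ha, ?_⟩
    have h1 : PhiP (hst (t, τ) ha) τ = b.1 := hPh
    have h2 : PhiS (hst (t, τ) ha) τ = b.2 := hSh
    show (PhiP (hst (t, τ) ha) τ, PhiS (hst (t, τ) ha) τ) = b
    rw [h1, h2]
  · intro a ha
    rw [sign_PhiP (hst a ha) a.2, PhiS_card (hst a ha) a.2,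
      Phi_prod B (hst a ha) a.2 (hmt a ha)]

end PfJProof

open PfJProof Finset in
set_option maxHeartbeats 2000000 in
theorem pf_J_add_smul {R : Type*} [CommRing R] (m : ℕ)
    (B : Matrix (Fin (2 * m)) (Fin (2 * m)) R) (hB : Bᵀ = -B) (z : R) :
    pf (Jmat m + z • B) =
      ∑ k ∈ Finset.range (m + 1), z ^ k *
        ∑ t ∈ Finset.univ.filter (fun t : Fin k → Fin m => StrictMono t),
          pf (blockSub B t) := by
  classical
  rw [pf_eq]
  have hA : ∀ σ ∈ Mset m,
      ((Equiv.Perm.sign σ : ℤ) : R) * ∏ j : Fin m, ((Jmat m + z • B : Matrix (Fin (2 * m)) (Fin (2 * m)) R) (σ (d0 j)) (σ (d1 j)))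
        = ∑ S ∈ (Finset.univ : Finset (Fin m)).powerset,
            (if (∀ j, j ∉ S → stdAt σ j)
              then ((Equiv.Perm.sign σ : ℤ) : R)
                * (z ^ S.card * ∏ j ∈ S, B (σ (d0 j)) (σ (d1 j)))
              else 0) := by
    intro σ hσ
    have hentry : ∀ j : Fin m, ((Jmat m + z • B : Matrix (Fin (2 * m)) (Fin (2 * m)) R) (σ (d0 j)) (σ (d1 j)))
        = z * B (σ (d0 j)) (σ (d1 j)) + (if stdAt σ j then (1 : R) else 0) := by
      intro j
      obtain ⟨hw, -⟩ := mem_Mset.mp hσ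
      have hlt := hw j
      rw [Matrix.add_apply, Matrix.smul_apply, smul_eq_mul]
      show (if (σ (d0 j)).val % 2 = 0 ∧ (σ (d1 j)).val = (σ (d0 j)).val + 1 then (1 : R)
          else if (σ (d1 j)).val % 2 = 0 ∧ (σ (d0 j)).val = (σ (d1 j)).val + 1 then -1 else 0)
          + z * B (σ (d0 j)) (σ (d1 j)) = _
      have hB2 : ¬((σ (d1 j)).val % 2 = 0 ∧ (σ (d0 j)).val = (σ (d1 j)).val + 1) := by
        rintro ⟨-, hcon⟩
        omega
      rw [if_neg hB2]
      have hiteq : (if (σ (d0 j)).val % 2 = 0 ∧ (σ (d1 j)).val = (σ (d0 j)).val + 1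
          then (1 : R) else 0) = (if stdAt σ j then (1 : R) else 0) :=
        if_congr Iff.rfl rfl rfl
      rw [hiteq]
      ring
    rw [Finset.prod_congr rfl (fun j _ => hentry j), Finset.prod_add, Finset.mul_sum]
    apply Finset.sum_congr rfl
    intro S _
    have hcond : (∀ j ∈ Finset.univ \ S, stdAt σ j) ↔ (∀ j, j ∉ S → stdAt σ j) := by
      constructor
      · intro h j hj
        exact h j (Finset.mem_sdiff.mpr ⟨Finset.mem_univ _, hj⟩)
      · intro h j hj
        exact h j (Finset.mem_sdiff.mp hj).2
    rw [Finset.prod_mul_distrib, Finset.prod_const, Finset.prod_boole]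
    by_cases hc : ∀ j, j ∉ S → stdAt σ j
    · rw [if_pos (hcond.mpr hc), if_pos hc, mul_one]
    · rw [if_neg (fun hh => hc (hcond.mp hh)), if_neg hc, mul_zero, mul_zero]
  rw [Finset.sum_congr rfl hA, ← Finset.sum_product', ← Finset.sum_filter]
  have hEq : (Mset m ×ˢ (Finset.univ : Finset (Fin m)).powerset).filter
        (fun p => ∀ j, j ∉ p.2 → stdAt p.1 j)
      = Finset.univ.filter (fun p : Equiv.Perm (Fin (2 * m)) × Finset (Fin m) =>
          p.1 ∈ Mset m ∧ ∀ j, j ∉ p.2 → stdAt p.1 j) := by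
    ext p
    simp only [Finset.mem_filter, Finset.mem_product, Finset.mem_powerset, Finset.mem_univ,
      true_and]
    constructor
    · rintro ⟨⟨h1, -⟩, h2⟩
      exact ⟨h1, h2⟩
    · rintro ⟨h1, h2⟩
      exact ⟨⟨h1, Finset.subset_univ _⟩, h2⟩
  rw [hEq]
  have hmap : ∀ p ∈ Finset.univ.filter (fun p : Equiv.Perm (Fin (2 * m)) × Finset (Fin m) =>
      p.1 ∈ Mset m ∧ ∀ j, j ∉ p.2 → stdAt p.1 j), p.2.card ∈ Finset.range (m + 1) := by
    intro p _
    refine Finset.mem_range.mpr (Nat.lt_succ_of_le ?_)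
    have := Finset.card_le_univ p.2
    simpa using this
  rw [← Finset.sum_fiberwise_of_maps_to hmap]
  apply Finset.sum_congr rfl
  intro k _
  rw [Finset.filter_filter]
  have hfc : Finset.univ.filter (fun p : Equiv.Perm (Fin (2 * m)) × Finset (Fin m) =>
        (p.1 ∈ Mset m ∧ ∀ j, j ∉ p.2 → stdAt p.1 j) ∧ p.2.card = k)
      = Finset.univ.filter (fun p : Equiv.Perm (Fin (2 * m)) × Finset (Fin m) =>
        p.1 ∈ Mset m ∧ (∀ j, j ∉ p.2 → stdAt p.1 j) ∧ p.2.card = k) := by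
    apply Finset.filter_congr
    intro p _
    rw [and_assoc]
  rw [hfc, per_k B z]
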